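/- Let V be a real inner product space and let α₁, α₂, ᾱ₃, ᾱ₄, β₁, β₂, β₃, β̄₄ ∈ V satisfy: ⟪β̄₄,β̄₄⟫ = ⟪α₁,α₁⟫ = ⟪β₁,β₁⟫ = ⟪α₂,α₂⟫ = ⟪β₂,β₂⟫ = ⟪β₃,β₃⟫ = 2; ⟪β̄₄,α₁⟫ = −1, ⟪α₁,β₁⟫ = −1, ⟪β₁,α₂⟫ = −1, ⟪α₂,β₂⟫ = −1, ⟪α₂,β₃⟫ = −1, and all other inner products among β̄₄, α₁, β₁, α₂, β₂, β₃ vanish; ⟪β̄₄,ᾱ₃⟫ = −1, ⟪β₁,ᾱ₃⟫ = 1, ⟪β₃,ᾱ₃⟫ = −1, ⟪β₂,ᾱ₃⟫ = 0, ⟪α₁,ᾱ₃⟫ = ⟪α₂,ᾱ₃⟫ = 0; ⟪β₂,ᾱ₄⟫ + ⟪β₃,ᾱ₄⟫ = 0 and ⟪β̄₄,ᾱ₄⟫ = ⟪β₁,ᾱ₄⟫ = ⟪α₁,ᾱ₄⟫ = ⟪α₂,ᾱ₄⟫ = 0 (the relevant Gram relations of the Carter diagram E₈(a₆)). Set β₄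 := −(β̄₄ + 2α₁ + 2β₁ + 2α₂ + β₂ + β₃). Then ⟪β₄,β₄⟫ = 2, ⟪β₄,α₁⟫ = −1, and β₄ is orthogonal to each of α₂, ᾱ₃, ᾱ₄, β₁, β₂, β₃ (the Gram relations of the Carter diagram E₈(a₄)). -/
import Mathlib


open scoped RealInnerProductSpace


theorem stmt13 {V : Type*} [NormedAddCommGroup V] [InnerProductSpace ℝ V]
    (α₁ α₂ αb₃ αb₄ β₁ β₂ β₃ βb₄ : V)
    (h0 : ⟪βb₄, βb₄⟫ = 2)
    (h1 : ⟪α₁, α₁⟫ = 2)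
    (h2 : ⟪β₁, β₁⟫ = 2)
    (h3 : ⟪α₂, α₂⟫ = 2)
    (h4 : ⟪β₂, β₂⟫ = 2)
    (h5 : ⟪β₃, β₃⟫ = 2)
    (h6 : ⟪βb₄, α₁⟫ = -1)
    (h7 : ⟪α₁, β₁⟫ = -1)
    (h8 : ⟪β₁, α₂⟫ = -1)
    (h9 : ⟪α₂, β₂⟫ = -1)
    (h10 : ⟪α₂, β₃⟫ = -1)
    (h11 : ⟪βb₄, β₁⟫ = 0)
    (h12 : ⟪βb₄, α₂⟫ = 0)
    (h13 : ⟪βb₄, β₂⟫ = 0)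
    (h14 : ⟪βb₄, β₃⟫ = 0)
    (h15 : ⟪α₁, α₂⟫ = 0)
    (h16 : ⟪α₁, β₂⟫ = 0)
    (h17 : ⟪α₁, β₃⟫ = 0)
    (h18 : ⟪β₁, β₂⟫ = 0)
    (h19 : ⟪β₁, β₃⟫ = 0)
    (h20 : ⟪β₂, β₃⟫ = 0)
    (h21 : ⟪βb₄, αb₃⟫ = -1)
    (h22 : ⟪β₁, αb₃⟫ = 1)
    (h23 : ⟪β₃, αb₃⟫ = -1)
    (h24 : ⟪β₂, αb₃⟫ = 0)
    (h25 : ⟪α₁, αb₃⟫ = 0)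
    (h26 : ⟪α₂, αb₃⟫ = 0)
    (h27 : ⟪β₂, αb₄⟫ + ⟪β₃, αb₄⟫ = 0)
    (h28 : ⟪βb₄, αb₄⟫ = 0)
    (h29 : ⟪β₁, αb₄⟫ = 0)
    (h30 : ⟪α₁, αb₄⟫ = 0)
    (h31 : ⟪α₂, αb₄⟫ = 0)
    (β₄ : V) (hdef : β₄ = -(βb₄ + (2:ℝ) • α₁ + (2:ℝ) • β₁ + (2:ℝ) • α₂ + β₂ + β₃)) :
    ⟪β₄, β₄⟫ = 2 ∧
    ⟪β₄, α₁⟫ = -1 ∧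
    ⟪β₄, α₂⟫ = 0 ∧
    ⟪β₄, αb₃⟫ = 0 ∧
    ⟪β₄, αb₄⟫ = 0 ∧
    ⟪β₄, β₁⟫ = 0 ∧
    ⟪β₄, β₂⟫ = 0 ∧
    ⟪β₄, β₃⟫ = 0 := by
  subst hdef
  have c1 := real_inner_comm βb₄ α₁
  have c2 := real_inner_comm βb₄ β₁
  have c3 := real_inner_comm βb₄ α₂
  have c4 := real_inner_comm βb₄ β₂
  have c5 := real_inner_comm βb₄ β₃
  have c6 := real_inner_comm α₁ β₁
  have c7 := real_inner_comm α₁ α₂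
  have c8 := real_inner_comm α₁ β₂
  have c9 := real_inner_comm α₁ β₃
  have c10 := real_inner_comm β₁ α₂
  have c11 := real_inner_comm β₁ β₂
  have c12 := real_inner_comm β₁ β₃
  have c13 := real_inner_comm α₂ β₂
  have c14 := real_inner_comm α₂ β₃
  have c15 := real_inner_comm β₂ β₃
  refine ⟨?_, ?_, ?_, ?_, ?_, ?_, ?_, ?_⟩ <;>
    simp only [inner_neg_left, inner_neg_right, inner_add_left, inner_add_right,
      real_inner_smul_left, real_inner_smul_right] <;>
    linarith
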